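/- arXiv:2008.01609 — 3 statements merged into one kernel-verified Lean document; each statement's English description precedes it below -/
import Mathlib

section
/- The Kripke-Kleene branch evaluation B_KK, mapping finite branches to their last element and infinite branches to u (unknown), is monotone and selective with respect to every interpretation. -/
namespace JT

open scoped Classical

/-- Three truth values: 0 = 𝐟, 1 = 𝐮, 2 = 𝐭, with the truth order. -/
abbrev TV := Fin 3

/-- Complement on truth values: swaps 𝐭 and 𝐟, fixes 𝐮. -/
def TV.neg (v : TV) : TV := 2 - v

/-- A justification frame over a fact space `F`. -/
structure JFrame (F : Type) where
  compl : F → F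
  compl_invol : ∀ x, compl (compl x) = x
  tLit : F
  fLit : F
  uLit : F
  compl_t : compl tLit = fLit
  compl_u : compl uLit = uLit
  lit_distinct : tLit ≠ fLit ∧ tLit ≠ uLit ∧ fLit ≠ uLit
  defined : Set F
  defined_compl : ∀ x ∈ defined, compl x ∈ defined
  t_not_def : tLit ∉ defined
  f_not_def : fLit ∉ defined
  u_not_def : uLit ∉ defined
  rules : Set (F × Set F)
  rules_head : ∀ r ∈ rules, r.1 ∈ defined
  rules_body_ne : ∀ r ∈ rules, r.2.Nonempty
  rules_ex : ∀ x ∈ defined, ∃ A : Set F, (x, A) ∈ rules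

variable {F : Type}

def JFrame.openF (JF : JFrame F) : Set F := JF.definedᶜ

/-- A (three-valued) interpretation of the fact space. -/
structure Interp (JF : JFrame F) where
  val : F → TV
  val_compl : ∀ x, val (JF.compl x) = TV.neg (val x)
  val_t : val JF.tLit = 2
  val_f : val JF.fLit = 0
  val_u : val JF.uLit = 1

/-- Branches: finite (the whole finite sequence, as a list) or infinite. -/
inductive Branch (F : Type) where
  | fin : List F → Branch F
  | inf : (ℕ → F) → Branch F

def Branch.startsAt : Branch F → F → Prop
  | .fin l, x => l.head? = some x
  | .inf s, x => s 0 = x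

/-- `b` is a `JF`-branch: an infinite sequence in `F_d`, or a finite nonempty
sequence in `F_d` followed by an open fact. -/
def JFrame.IsBranch (JF : JFrame F) : Branch F → Prop
  | .fin l => 2 ≤ l.length ∧ (∀ a ∈ l.dropLast, a ∈ JF.defined) ∧
      (∀ e, l.getLast? = some e → e ∉ JF.defined)
  | .inf s => ∀ n, s n ∈ JF.defined

/-- Prepend a finite path `p` to a branch. -/
def Branch.prepend (p : List F) : Branch F → Branch F
  | .fin l => .fin (p ++ l)
  | .inf s => .inf (fun n => if h : n < p.length then p.get ⟨n, h⟩ else s (n - p.length))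

/-- Elementwise complement of a branch. -/
def Branch.compl (JF : JFrame F) : Branch F → Branch F
  | .fin l => .fin (l.map JF.compl)
  | .inf s => .inf (fun n => JF.compl (s n))

/-- A branch evaluation is consistent if `B(~b) = ~B(b)`. -/
def JFrame.ConsistentBE (JF : JFrame F) (B : Branch F → F) : Prop :=
  ∀ b : Branch F, JF.IsBranch b → B (Branch.compl JF b) = JF.compl (B b)

/-- A graph-like justification (labels are injective, so nodes are facts). -/
structure GraphJust (JF : JFrame F) where
  nodes : Set F
  edges : Set (F × F)
  edges_mem : ∀ e ∈ edges, e.1 ∈ nodes ∧ e.2 ∈ nodes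
  rule_of_internal : ∀ x ∈ nodes, (∃ y, (x, y) ∈ edges) →
      (x, {y | (x, y) ∈ edges}) ∈ JF.rules

namespace GraphJust
variable {JF : JFrame F}

def LocallyComplete (J : GraphJust JF) : Prop :=
  ∀ x ∈ J.nodes, x ∈ JF.defined → ∃ y, (x, y) ∈ J.edges

def Connected (J : GraphJust JF) : Prop :=
  ∀ x ∈ J.nodes, ∀ y ∈ J.nodes,
    Relation.ReflTransGen (fun a b => (a, b) ∈ J.edges ∨ (b, a) ∈ J.edges) x y

def IsRoot (J : GraphJust JF) (x : F) : Prop :=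
  x ∈ J.nodes ∧ ∀ y ∈ J.nodes, Relation.ReflTransGen (fun a b => (a, b) ∈ J.edges) x y

/-- `J`-branches starting in `x`: maximal paths in `J` from `x`. -/
def IsBranchFrom (J : GraphJust JF) (x : F) : Branch F → Prop
  | .fin l => l.head? = some x ∧ (∀ a ∈ l, a ∈ J.nodes) ∧
      List.Chain' (fun a b => (a, b) ∈ J.edges) l ∧
      (∀ e, l.getLast? = some e → ∀ y, (e, y) ∉ J.edges)
  | .inf s => s 0 = x ∧ (∀ n, s n ∈ J.nodes) ∧ (∀ n, (s n, s (n+1)) ∈ J.edges)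

/-- The value of `x` by `J` under `I`. -/
noncomputable def val (J : GraphJust JF) (B : Branch F → F) (x : F) (I : Interp JF) : TV :=
  ⨅ b ∈ {b | J.IsBranchFrom x b}, I.val (B b)

end GraphJust

/-- Underlying undirected simple graph of a directed relation. -/
def symGraph {α : Type} (e : α → α → Prop) : SimpleGraph α where
  Adj a b := a ≠ b ∧ (e a b ∨ e b a)
  symm := ⟨fun _ _ h => ⟨Ne.symm h.1, h.2.symm⟩⟩
  loopless := ⟨fun _ h => h.1 rfl⟩

/-- A tree-like justification: a directed labelled graph whose underlying
undirected graph is a forest. -/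
structure TreeJust (JF : JFrame F) where
  Node : Type
  edge : Node → Node → Prop
  label : Node → F
  rule_of_internal : ∀ n, (∃ m, edge n m) →
      (label n, {y | ∃ m, edge n m ∧ label m = y}) ∈ JF.rules
  forest : (symGraph edge).IsAcyclic

namespace TreeJust
variable {JF : JFrame F}

def LocallyComplete (T : TreeJust JF) : Prop :=
  ∀ n, T.label n ∈ JF.defined → ∃ m, T.edge n m

def Connected (T : TreeJust JF) : Prop :=
  ∀ a b : T.Node, Relation.ReflTransGen (fun u v => T.edge u v ∨ T.edge v u) a b

def IsRoot (T : TreeJust JF) (x : F) : Prop :=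
  ∃ n, T.label n = x ∧ ∀ m, Relation.ReflTransGen T.edge n m

def IsBranchFrom (T : TreeJust JF) (x : F) : Branch F → Prop
  | .fin l => ∃ ns : List T.Node, List.Chain' T.edge ns ∧ ns.map T.label = l ∧
      l.head? = some x ∧ (∀ nl, ns.getLast? = some nl → ∀ m, ¬ T.edge nl m)
  | .inf s => ∃ ns : ℕ → T.Node, (∀ n, T.edge (ns n) (ns (n+1))) ∧
      (∀ n, T.label (ns n) = s n) ∧ s 0 = x

noncomputable def val (T : TreeJust JF) (B : Branch F → F) (x : F) (I : Interp JF) : TV :=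
  ⨅ b ∈ {b | T.IsBranchFrom x b}, I.val (B b)

end TreeJust

/-- Graph-like supported value. -/
noncomputable def SVg (JF : JFrame F) (B : Branch F → F) (x : F) (I : Interp JF) : TV :=
  if x ∈ JF.defined then
    ⨆ J ∈ {J : GraphJust JF | J.LocallyComplete ∧ x ∈ J.nodes}, J.val B x I
  else I.val x

/-- Tree-like supported value. -/
noncomputable def SVt (JF : JFrame F) (B : Branch F → F) (x : F) (I : Interp JF) : TV :=
  if x ∈ JF.defined then
    ⨆ (T : TreeJust JF) (_ : T.LocallyComplete ∧ ∃ n, T.label n = x), T.val B x I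
  else I.val x

/-! ### Games -/

/-- A game graph: states owned by player 𝐓 (`T`) or by player 𝐅 (`Tᶜ`), edges `E`. -/
structure GameGraph (S : Type) where
  T : Set S
  E : Set (S × S)

namespace GameGraph
variable {S : Type}

def IsPath (G : GameGraph S) (p : List S) : Prop :=
  p ≠ [] ∧ List.Chain' (fun a b => (a, b) ∈ G.E) p

end GameGraph

/-- A general strategy for the player owning the states in `P`. -/
structure GenStrat {S : Type} (G : GameGraph S) (P : Set S) where
  next : List S → S
  next_ok : ∀ p s, G.IsPath p → p.getLast? = some s → s ∈ P →
      (∃ t2, (s, t2) ∈ G.E) → (s, next p) ∈ G.E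

/-- A positional strategy for the player owning the states in `P`. -/
structure PosStrat {S : Type} (G : GameGraph S) (P : Set S) where
  move : S → S
  move_ok : ∀ s ∈ P, (∃ t2, (s, t2) ∈ G.E) → (s, move s) ∈ G.E

/-- The embedding of positional strategies into general strategies. -/
noncomputable def PosStrat.toGen {S : Type} [Nonempty S] {G : GameGraph S} {P : Set S}
    (σ : PosStrat G P) : GenStrat G P where
  next p := σ.move (p.getLastD (Classical.arbitrary S))
  next_ok := by
    intro p s _ hlast hsP hout
    have h : p.getLastD (Classical.arbitrary S) = s := by
      rw [List.getLastD_eq_getLast?, hlast]; rfl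
    show (s, σ.move (p.getLastD (Classical.arbitrary S))) ∈ G.E
    rw [h]; exact σ.move_ok s hsP hout

/-- The finite prefixes of the unique play from `x` consistent with both strategies. -/
noncomputable def GameGraph.playPrefix {S : Type} (G : GameGraph S)
    (σ : GenStrat G G.T) (τ : GenStrat G G.Tᶜ) (x : S) : ℕ → List S
  | 0 => [x]
  | n + 1 =>
    let p := G.playPrefix σ τ x n
    match p.getLast? with
    | none => p
    | some s =>
      if (∃ t2, (s, t2) ∈ G.E) then
        p ++ [if s ∈ G.T then σ.next p else τ.next p]
      else p

/-- The trace of the play from `x`: the state at each time step, if any. -/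
noncomputable def GameGraph.playTrace {S : Type} (G : GameGraph S)
    (σ : GenStrat G G.T) (τ : GenStrat G G.Tᶜ) (x : S) : ℕ → Option S :=
  fun n => (G.playPrefix σ τ x n)[n]?

/-- Value of the play from `x`, for a valuation `v` of plays (given by traces). -/
noncomputable def GameGraph.uval {S V : Type} [CompleteLinearOrder V] (G : GameGraph S)
    (v : (ℕ → Option S) → V) (x : S) (σ : GenStrat G G.T) (τ : GenStrat G G.Tᶜ) : V :=
  v (G.playTrace σ τ x)

/-- Optimal pair of strategies. -/
def GameGraph.OptimalPair {S V : Type} [CompleteLinearOrder V] (G : GameGraph S)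
    (v : (ℕ → Option S) → V) (σs : GenStrat G G.T) (τs : GenStrat G G.Tᶜ) : Prop :=
  ∀ s : S, (∀ σ, G.uval v s σ τs ≤ G.uval v s σs τs) ∧
    (∀ τ, G.uval v s σs τs ≤ G.uval v s σs τ)

/-! ### The justification game -/

/-- Rule symbols `r_{x ← A}`. -/
def RuleSym (JF : JFrame F) : Type := {r : F × Set F // r ∈ JF.rules}

/-- States of the justification game: facts (owned by 𝐓) and rule symbols (owned by 𝐅). -/
abbrev GState (JF : JFrame F) : Type := F ⊕ RuleSym JF

instance (JF : JFrame F) : Nonempty (GState JF) := ⟨Sum.inl JF.tLit⟩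

/-- The game graph `G_JF` associated to a justification frame. -/
def JFrame.game (JF : JFrame F) : GameGraph (GState JF) where
  T := Set.range Sum.inl
  E := {e | (∃ (x : F) (r : RuleSym JF), e = (Sum.inl x, Sum.inr r) ∧ r.1.1 = x) ∨
            (∃ (r : RuleSym JF) (y : F), e = (Sum.inr r, Sum.inl y) ∧ y ∈ r.1.2)}

/-- The `JF`-branch obtained from the play from `s` by filtering out rule symbols. -/
noncomputable def JFrame.playBranch (JF : JFrame F)
    (σ : GenStrat JF.game JF.game.T) (τ : GenStrat JF.game JF.game.Tᶜ)
    (s : GState JF) : Branch F :=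
  if h : ∃ n, JF.game.playPrefix σ τ s (n+1) = JF.game.playPrefix σ τ s n then
    .fin ((JF.game.playPrefix σ τ s (Nat.find h)).filterMap Sum.getLeft?)
  else
    .inf (fun k => ((JF.game.playPrefix σ τ s (2*k+2)).filterMap Sum.getLeft?).getD k JF.tLit)

/-- `u(s, σ, τ) = I(B(b_{play(s,σ,τ)}))`. -/
noncomputable def JFrame.uS (JF : JFrame F) (B : Branch F → F) (I : Interp JF)
    (s : GState JF) (σ : GenStrat JF.game JF.game.T) (τ : GenStrat JF.game JF.game.Tᶜ) : TV :=
  I.val (B (JF.playBranch σ τ s))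

/-- Optimal pair of strategies in the justification game `G_{JS,I}`. -/
def JFrame.OptPair (JF : JFrame F) (B : Branch F → F) (I : Interp JF)
    (σs : GenStrat JF.game JF.game.T) (τs : GenStrat JF.game JF.game.Tᶜ) : Prop :=
  ∀ s : GState JF, (∀ σ, JF.uS B I s σ τs ≤ JF.uS B I s σs τs) ∧
    (∀ τ, JF.uS B I s σs τs ≤ JF.uS B I s σs τ)

/-! ### Play graphs of positional strategies, filtered -/

/-- Steps consistent with a positional strategy for 𝐓. -/
def JFrame.stepT (JF : JFrame F) (σ : PosStrat JF.game JF.game.T)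
    (a b : GState JF) : Prop :=
  (a, b) ∈ JF.game.E ∧ (a ∈ JF.game.T → b = σ.move a)

def JFrame.reachT (JF : JFrame F) (σ : PosStrat JF.game JF.game.T) (x : F) :
    Set (GState JF) :=
  {s | Relation.ReflTransGen (JF.stepT σ) (Sum.inl x) s}

/-- Nodes of the play graph of `σ` at `x` with rule symbols filtered out. -/
def JFrame.filtNodesT (JF : JFrame F) (σ : PosStrat JF.game JF.game.T) (x : F) : Set F :=
  {y | Sum.inl y ∈ JF.reachT σ x}

/-- Edges of the play graph of `σ` at `x` with rule symbols filtered out. -/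
def JFrame.filtEdgesT (JF : JFrame F) (σ : PosStrat JF.game JF.game.T) (x : F) :
    Set (F × F) :=
  {e | ∃ r : RuleSym JF, Sum.inl e.1 ∈ JF.reachT σ x ∧
      JF.stepT σ (Sum.inl e.1) (Sum.inr r) ∧ JF.stepT σ (Sum.inr r) (Sum.inl e.2)}

/-- Steps consistent with a positional strategy for 𝐅. -/
def JFrame.stepF (JF : JFrame F) (τ : PosStrat JF.game JF.game.Tᶜ)
    (a b : GState JF) : Prop :=
  (a, b) ∈ JF.game.E ∧ (a ∈ JF.game.Tᶜ → b = τ.move a)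

def JFrame.reachF (JF : JFrame F) (τ : PosStrat JF.game JF.game.Tᶜ) (x : F) :
    Set (GState JF) :=
  {s | Relation.ReflTransGen (JF.stepF τ) (Sum.inl x) s}

/-- Nodes of the play graph of `τ` at `x`, rule symbols filtered out, labels negated. -/
def JFrame.filtNodesF (JF : JFrame F) (τ : PosStrat JF.game JF.game.Tᶜ) (x : F) : Set F :=
  {w | ∃ y : F, w = JF.compl y ∧ Sum.inl y ∈ JF.reachF τ x}

/-- Edges of the play graph of `τ` at `x`, rule symbols filtered out, labels negated. -/
def JFrame.filtEdgesF (JF : JFrame F) (τ : PosStrat JF.game JF.game.Tᶜ) (x : F) :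
    Set (F × F) :=
  {e | ∃ (y z : F) (r : RuleSym JF), e = (JF.compl y, JF.compl z) ∧
      Sum.inl y ∈ JF.reachF τ x ∧
      JF.stepF τ (Sum.inl y) (Sum.inr r) ∧ JF.stepF τ (Sum.inr r) (Sum.inl z)}

/-! ### Complementation -/

/-- A selection function for `x` chooses an element from the body of each rule of `x`. -/
def JFrame.SelectionFn (JF : JFrame F) (x : F) : Type :=
  {s : {A : Set F // (x, A) ∈ JF.rules} → F // ∀ A, s A ∈ A.1}

/-- `JF` is complementary: fixed under complementation, i.e. for each defined `x` and
selection function `s` for `x`, the rule `~x ← ~Im(s)` belongs to the rules. -/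
def JFrame.Complementary (JF : JFrame F) : Prop :=
  ∀ x ∈ JF.defined, ∀ s : JF.SelectionFn x,
    (JF.compl x, JF.compl '' Set.range s.1) ∈ JF.rules

/-! ### Monotone, selective, transitive branch evaluations -/

/-- Monotone branch evaluation. -/
def JFrame.MonotoneBE (JF : JFrame F) (B : Branch F → F) : Prop :=
  ∀ (I : Interp JF) (x : F), x ∈ JF.defined →
    ∀ b1 b2 : Branch F, JF.IsBranch b1 → JF.IsBranch b2 →
      b1.startsAt x → b2.startsAt x →
      ∀ p : List F, (∀ a ∈ p, a ∈ JF.defined) →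
        I.val (B b1) ≤ I.val (B b2) →
        I.val (B (Branch.prepend p b1)) ≤ I.val (B (Branch.prepend p b2))

/-- Transitive branch evaluation: dropping the first element of a branch with at
least three elements does not change its value. -/
def JFrame.TransitiveBE (JF : JFrame F) (B : Branch F → F) : Prop :=
  ∀ (x0 : F) (b : Branch F), JF.IsBranch b → B (Branch.prepend [x0] b) = B b

/-- A finite loop starting in `x`. -/
def JFrame.IsLoopAt (JF : JFrame F) (x : F) (q : List F) : Prop :=
  q.head? = some x ∧ ∀ a ∈ q, a ∈ JF.defined

/-- Finite iterations of loops from `L`. -/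
def FinIter (L : Set (List F)) : Set (List F) :=
  {w | ∃ ls : List (List F), (∀ l ∈ ls, l ∈ L) ∧ w = ls.flatten}

/-- `s` is the concatenation of the infinite sequence of lists `f`. -/
def IsConcat (f : ℕ → List F) (s : ℕ → F) : Prop :=
  ∃ c : ℕ → ℕ, c 0 = 0 ∧ (∀ i, c (i+1) = c i + (f i).length) ∧
    ∀ i k (h : k < (f i).length), s (c i + k) = (f i).get ⟨k, h⟩

/-- `L^ω`: infinite iterations of loops from `L`, as branches. -/
def InfIter (L : Set (List F)) : Set (Branch F) :=
  {b | ∃ (f : ℕ → List F) (s : ℕ → F), (∀ i, f i ∈ L) ∧ (∀ i, f i ≠ []) ∧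
      IsConcat f s ∧ b = .inf s}

/-- `p L* K`. -/
def StarKSet (p : List F) (L : Set (List F)) (K : Set (Branch F)) : Set (Branch F) :=
  {b | ∃ w ∈ FinIter L, ∃ k ∈ K, b = Branch.prepend (p ++ w) k}

/-- `p L^ω`. -/
def OmegaSet (p : List F) (L : Set (List F)) : Set (Branch F) :=
  {b | ∃ b0 ∈ InfIter L, b = Branch.prepend p b0}

/-- `p K`. -/
def PrepSet (p : List F) (K : Set (Branch F)) : Set (Branch F) :=
  (Branch.prepend p) '' K

/-- Selective branch evaluation with respect to `I`. -/
def JFrame.SelectiveBE (JF : JFrame F) (B : Branch F → F) (I : Interp JF) : Prop :=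
  ∀ p : List F, (∀ a ∈ p, a ∈ JF.defined) →
  ∀ x ∈ JF.defined,
  ∀ M N : Set (List F), (∀ q ∈ M, JF.IsLoopAt x q) → (∀ q ∈ N, JF.IsLoopAt x q) →
  ∀ K : Set (Branch F), (∀ b ∈ K, JF.IsBranch b ∧ b.startsAt x) →
  ∀ b ∈ StarKSet p (M ∪ N) K ∪ OmegaSet p (M ∪ N),
    (∃ bs ∈ OmegaSet p M ∪ OmegaSet p N ∪ PrepSet p K, I.val (B bs) ≤ I.val (B b)) ∧
    (∃ bu ∈ OmegaSet p M ∪ OmegaSet p N ∪ PrepSet p K, I.val (B b) ≤ I.val (B bu))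

/-! ### Concrete branch evaluations -/

/-- Supported (completion) branch evaluation: maps a branch to its second element. -/
def Bsp (JF : JFrame F) : Branch F → F
  | .fin l => l[1]?.getD JF.uLit
  | .inf s => s 1

/-- Kripke-Kleene branch evaluation. -/
def Bkk (JF : JFrame F) : Branch F → F
  | .fin l => l.getLastD JF.uLit
  | .inf _ => JF.uLit

/-- A sign function; `true` means positive, `false` negative. -/
structure SignFn (JF : JFrame F) where
  sgn : F → Bool
  sgn_compl : ∀ x ∈ JF.defined, sgn (JF.compl x) ≠ sgn x

/-- Well-founded branch evaluation. -/
noncomputable def Bwf (JF : JFrame F) (sg : SignFn JF) : Branch F → F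
  | .fin l => l.getLastD JF.uLit
  | .inf s =>
    if ∃ n, ∀ i ≥ n, sg.sgn (s i) = false then JF.tLit
    else if ∃ n, ∀ i ≥ n, sg.sgn (s i) = true then JF.fLit
    else JF.uLit

/-- Stable branch evaluation. -/
noncomputable def Bst (JF : JFrame F) (sg : SignFn JF) : Branch F → F
  | .fin l =>
    match l with
    | [] => JF.uLit
    | x0 :: rest =>
      match rest.find? (fun y => sg.sgn y != sg.sgn x0) with
      | some y => y
      | none => Bwf JF sg (.fin (x0 :: rest))
  | .inf s =>
    if h : ∃ i, sg.sgn (s i) ≠ sg.sgn (s 0) then s (Nat.find h)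
    else Bwf JF sg (.inf s)

end JT

namespace JT

/-- Prepending a finite path does not change the Kripke-Kleene value, provided the
branch is infinite or a nonempty finite list. -/
lemma bkk_prepend {F : Type} (JF : JFrame F) (p : List F) (b : Branch F)
    (hb : ∀ l, b = .fin l → l ≠ []) :
    Bkk JF (Branch.prepend p b) = Bkk JF b := by
  cases b with
  | fin l =>
      have hl : l ≠ [] := hb l rfl
      simp [Branch.prepend, Bkk, List.getLastD_eq_getLast?, List.getLast?_append_of_ne_nil _ hl]
  | inf s => simp [Branch.prepend, Bkk]

lemma isBranch_ne_nil {F : Type} (JF : JFrame F) {b : Branch F} (h : JF.IsBranch b) :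
    ∀ l, b = .fin l → l ≠ [] := by
  intro l hl
  cases b with
  | fin l' =>
      cases hl
      intro hnil
      simp [JFrame.IsBranch, hnil] at h
  | inf s => simp at hl

theorem stmt15 {F : Type} (JF : JFrame F) :
    JF.MonotoneBE (Bkk JF) ∧ ∀ I : Interp JF, JF.SelectiveBE (Bkk JF) I := by
  constructor
  · intro I x hx b1 b2 hb1 hb2 _ _ p hp hle
    rw [bkk_prepend JF p b1 (isBranch_ne_nil JF hb1),
        bkk_prepend JF p b2 (isBranch_ne_nil JF hb2)]
    exact hle
  · intro I p hp x hx M N hM hN K hK b hb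
    rcases hb with hb | hb
    · -- b ∈ StarKSet: witness prepend p k with equal value
      rcases hb with ⟨w, _, k, hk, rfl⟩
      have hkne : ∀ l, k = .fin l → l ≠ [] := isBranch_ne_nil JF (hK k hk).1
      have heq : Bkk JF (Branch.prepend (p ++ w) k) = Bkk JF (Branch.prepend p k) := by
        rw [bkk_prepend JF _ k hkne, bkk_prepend JF _ k hkne]
      have hmem : Branch.prepend p k ∈
          OmegaSet p M ∪ OmegaSet p N ∪ PrepSet p K :=
        Or.inr ⟨k, hk, rfl⟩
      exact ⟨⟨_, hmem, le_of_eq (congrArg I.val heq.symm)⟩, ⟨_, hmem, le_of_eq (congrArg I.val heq)⟩⟩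
    · -- b ∈ OmegaSet p (M ∪ N): build a constant iteration of one loop
      rcases hb with ⟨b0, ⟨f, s, hf, hfne, _, rfl⟩, rfl⟩
      have hq : f 0 ∈ M ∪ N := hf 0
      set q := f 0 with hqdef
      have hqne : q ≠ [] := hfne 0
      have hqpos : 0 < q.length := List.length_pos_iff.mpr hqne
      -- constant iteration of q
      set s' : ℕ → F := fun n => q.get ⟨n % q.length, Nat.mod_lt n hqpos⟩ with hs'
      have hconcat : IsConcat (fun _ => q) s' := by
        refine ⟨fun i => i * q.length, by simp, fun i => by ring, ?_⟩
        intro i k h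
        show q.get ⟨(i * q.length + k) % q.length, _⟩ = q.get ⟨k, h⟩
        congr 1
        simp [Nat.add_comm, Nat.add_mul_mod_self_right, Nat.mod_eq_of_lt h]
      have hinf : (Branch.inf s') ∈ InfIter ({q} : Set (List F)) :=
        ⟨fun _ => q, s', fun _ => rfl, fun _ => hqne, hconcat, rfl⟩
      have hval : I.val (Bkk JF (Branch.prepend p (Branch.inf s'))) 
          = I.val (Bkk JF (Branch.prepend p (Branch.inf s))) := by
        simp [Branch.prepend, Bkk]
      have hmem : Branch.prepend p (Branch.inf s') ∈
          OmegaSet p M ∪ OmegaSet p N ∪ PrepSet p K := by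
        rcases hq with hq | hq
        · exact Or.inl (Or.inl ⟨Branch.inf s', ⟨fun _ => q, s', fun _ => hq,
            fun _ => hqne, hconcat, rfl⟩, rfl⟩)
        · exact Or.inl (Or.inr ⟨Branch.inf s', ⟨fun _ => q, s', fun _ => hq,
            fun _ => hqne, hconcat, rfl⟩, rfl⟩)
      exact ⟨⟨_, hmem, le_of_eq hval⟩, ⟨_, hmem, le_of_eq hval.symm⟩⟩

end JT
end

section
/- Given a sign function on the justification frame, the well-founded branch evaluation B_wf — mapping finite branches to their last element, infinite branches with a negative tail to t, infinite branches with a positive tail to f, and other infinite branches to u — is monotone and selective with respect to every interpretation. -/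
namespace JT


section Aux
variable {F : Type}

private lemma get_zero_of_head?' {α : Type} {l : List α} {x : α}
    (h : l.head? = some x) (hp : 0 < l.length) : l.get ⟨0, hp⟩ = x := by
  cases l with
  | nil => simp at h
  | cons a t => simp at h; simpa using h

private lemma Bwf_prepend_fin (JF : JFrame F) (sg : SignFn JF) (p l : List F) (hl : l ≠ []) :
    Bwf JF sg (Branch.prepend p (.fin l)) = Bwf JF sg (.fin l) := by
  show Bwf JF sg (.fin (p ++ l)) = _
  simp [Bwf, List.getLastD_eq_getLast?, List.getLast?_append, Option.or_of_isSome, hl]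

private lemma eventually_prepend (p : List F) (s : ℕ → F) (P : F → Prop) :
    (∃ n, ∀ i ≥ n, P (if h : i < p.length then p.get ⟨i, h⟩ else s (i - p.length))) ↔
      ∃ n, ∀ i ≥ n, P (s i) := by
  constructor
  · rintro ⟨n, hn⟩
    refine ⟨n, fun i hi => ?_⟩
    have h := hn (i + p.length) (le_trans hi (Nat.le_add_right _ _))
    rw [dif_neg (by omega)] at h
    simpa using h
  · rintro ⟨n, hn⟩
    refine ⟨n + p.length, fun i hi => ?_⟩
    rw [dif_neg (by omega)]
    exact hn _ (by omega)

private lemma Bwf_inf_congr (JF : JFrame F) (sg : SignFn JF) (s t : ℕ → F)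
    (h : ∀ v : Bool, (∃ n, ∀ i ≥ n, sg.sgn (s i) = v) ↔ (∃ n, ∀ i ≥ n, sg.sgn (t i) = v)) :
    Bwf JF sg (.inf s) = Bwf JF sg (.inf t) := by
  simp only [Bwf]
  by_cases h1 : ∃ n, ∀ i ≥ n, sg.sgn (t i) = false
  · rw [if_pos ((h false).2 h1), if_pos h1]
  · rw [if_neg (fun c => h1 ((h false).1 c)), if_neg h1]
    by_cases h2 : ∃ n, ∀ i ≥ n, sg.sgn (t i) = true
    · rw [if_pos ((h true).2 h2), if_pos h2]
    · rw [if_neg (fun c => h2 ((h true).1 c)), if_neg h2]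

private lemma Bwf_prepend_inf (JF : JFrame F) (sg : SignFn JF) (p : List F) (s : ℕ → F) :
    Bwf JF sg (Branch.prepend p (.inf s)) = Bwf JF sg (.inf s) := by
  refine Bwf_inf_congr JF sg _ s fun v => ?_
  exact eventually_prepend p s (fun y => sg.sgn y = v)

private lemma Bwf_prepend (JF : JFrame F) (sg : SignFn JF) (p : List F) (b : Branch F)
    (hb : ∀ l, b = .fin l → l ≠ []) :
    Bwf JF sg (Branch.prepend p b) = Bwf JF sg b := by
  cases b with
  | fin l => exact Bwf_prepend_fin JF sg p l (hb l rfl)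
  | inf s => exact Bwf_prepend_inf JF sg p s

/-- The infinite repetition of a nonempty list. -/
private def loopSeq (q : List F) (hq : q ≠ []) : ℕ → F :=
  fun m => q.get ⟨m % q.length, Nat.mod_lt m (List.length_pos_iff.mpr hq)⟩

private lemma loopSeq_concat (q : List F) (hq : q ≠ []) :
    IsConcat (fun _ => q) (loopSeq q hq) := by
  refine ⟨fun j => j * q.length, by simp, fun i => by ring, ?_⟩
  intro i k h
  unfold loopSeq
  have hmod : (i * q.length + k) % q.length = k := by
    rw [Nat.add_comm, Nat.mul_comm, Nat.add_mul_mod_self_left, Nat.mod_eq_of_lt h]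
  exact congrArg q.get (Fin.ext hmod)

private lemma exists_loop (JF : JFrame F) (sg : SignFn JF) (x : F)
    (f : ℕ → List F) (s : ℕ → F) (hne : ∀ i, f i ≠ [])
    (hhead : ∀ i, (f i).head? = some x) (hcon : IsConcat f s) :
    ∃ i, Bwf JF sg (.inf (loopSeq (f i) (hne i))) = Bwf JF sg (.inf s) := by
  obtain ⟨c, hc0, hcs, hval⟩ := hcon
  have hlen : ∀ i, 0 < (f i).length := fun i => List.length_pos_iff.mpr (hne i)
  have hmono : ∀ i, i ≤ c i := by
    intro i
    induction i with
    | zero => omega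
    | succ n ih => have h1 := hcs n; have h2 := hlen n; omega
  have hxc : ∀ i, s (c i) = x := by
    intro i
    have h0 := hval i 0 (hlen i)
    rw [Nat.add_zero] at h0
    rw [h0]
    exact get_zero_of_head?' (hhead i) (hlen i)
  by_cases hev : ∃ n, ∀ i ≥ n, sg.sgn (s i) = sg.sgn x
  · obtain ⟨n, hn⟩ := hev
    refine ⟨n, ?_⟩
    have hall : ∀ m, sg.sgn (loopSeq (f n) (hne n) m) = sg.sgn x := by
      intro m
      have hk : m % (f n).length < (f n).length := Nat.mod_lt _ (hlen n)
      have hv := hval n _ hk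
      unfold loopSeq
      rw [← hv]
      exact hn _ (le_trans (hmono n) (Nat.le_add_right _ _))
    cases hb : sg.sgn x with
    | false =>
      have l1 : ∃ k, ∀ i ≥ k, sg.sgn (loopSeq (f n) (hne n) i) = false :=
        ⟨0, fun i _ => (hall i).trans hb⟩
      have l2 : ∃ k, ∀ i ≥ k, sg.sgn (s i) = false := ⟨n, fun i hi => (hn i hi).trans hb⟩
      simp only [Bwf]
      rw [if_pos l1, if_pos l2]
    | true =>
      have l1 : ¬ ∃ k, ∀ i ≥ k, sg.sgn (loopSeq (f n) (hne n) i) = false := by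
        rintro ⟨k, hk⟩
        have h1 := hk k le_rfl
        rw [(hall k).trans hb] at h1
        exact Bool.noConfusion h1
      have l2 : ¬ ∃ k, ∀ i ≥ k, sg.sgn (s i) = false := by
        rintro ⟨k, hk⟩
        have h1 := hk (c (max n k)) (le_trans (le_max_right n k) (hmono _))
        rw [hxc, hb] at h1
        exact Bool.noConfusion h1
      have l3 : ∃ k, ∀ i ≥ k, sg.sgn (loopSeq (f n) (hne n) i) = true :=
        ⟨0, fun i _ => (hall i).trans hb⟩
      have l4 : ∃ k, ∀ i ≥ k, sg.sgn (s i) = true := ⟨n, fun i hi => (hn i hi).trans hb⟩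
      simp only [Bwf]
      rw [if_neg l1, if_neg l2, if_pos l3, if_pos l4]
  · push_neg at hev
    obtain ⟨m, hm1, hm2⟩ := hev 0
    obtain ⟨i, hi1, hi2⟩ := by
      show ∃ i, c i ≤ m ∧ m < c i + (f i).length
      clear hm1 hm2
      induction m with
      | zero => exact ⟨0, by simp [hc0, hlen 0]⟩
      | succ n ih =>
        obtain ⟨j, h1, h2⟩ := ih
        by_cases h : n + 1 < c j + (f j).length
        · exact ⟨j, by omega, h⟩
        · have hcj : c (j + 1) = c j + (f j).length := hcs j
          have := hlen (j + 1)
          exact ⟨j + 1, by omega, by omega⟩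
    refine ⟨i, ?_⟩
    have hkm : m - c i < (f i).length := by omega
    have hsm : (f i).get ⟨m - c i, hkm⟩ = s m := by
      have hv := hval i (m - c i) hkm
      rw [Nat.add_sub_cancel' hi1] at hv
      exact hv.symm
    have hloopx : ∀ k : ℕ, sg.sgn (loopSeq (f i) (hne i) (k * (f i).length)) = sg.sgn x := by
      intro k
      unfold loopSeq
      have h0 : k * (f i).length % (f i).length = 0 := Nat.mul_mod_left k _
      rw [congrArg (f i).get (Fin.ext h0 : (⟨_, _⟩ : Fin _) = ⟨0, hlen i⟩)]
      rw [get_zero_of_head?' (hhead i) (hlen i)]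
    have hloopm : ∀ k : ℕ, sg.sgn (loopSeq (f i) (hne i) (k * (f i).length + (m - c i)))
        = sg.sgn (s m) := by
      intro k
      unfold loopSeq
      have h0 : (k * (f i).length + (m - c i)) % (f i).length = m - c i := by
        rw [Nat.add_comm, Nat.mul_comm, Nat.add_mul_mod_self_left, Nat.mod_eq_of_lt hkm]
      rw [congrArg (f i).get (Fin.ext h0 : (⟨_, _⟩ : Fin _) = ⟨m - c i, hkm⟩), hsm]
    have hfail1 : ∀ v : Bool, ¬ ∃ k, ∀ j ≥ k, sg.sgn (loopSeq (f i) (hne i) j) = v := by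
      rintro v ⟨k, hk⟩
      have hkL : k ≤ k * (f i).length := Nat.le_mul_of_pos_right k (hlen i)
      have e1 := hk _ hkL
      have e2 := hk (k * (f i).length + (m - c i)) (by omega)
      rw [hloopx] at e1
      rw [hloopm] at e2
      exact hm2 (e2.trans e1.symm)
    have hfail2 : ∀ v : Bool, ¬ ∃ k, ∀ j ≥ k, sg.sgn (s j) = v := by
      rintro v ⟨k, hk⟩
      obtain ⟨m', hm1', hm2'⟩ := hev k
      have e1 := hk (c k) (hmono k)
      have e2 := hk m' hm1'
      rw [hxc] at e1
      exact hm2' (e2.trans e1.symm)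
    simp only [Bwf]
    rw [if_neg (hfail1 false), if_neg (hfail2 false), if_neg (hfail1 true),
      if_neg (hfail2 true)]

end Aux

theorem stmt16 {F : Type} (JF : JFrame F) (sg : SignFn JF) :
    JF.MonotoneBE (Bwf JF sg) ∧ ∀ I : Interp JF, JF.SelectiveBE (Bwf JF sg) I := by
  have hfinne : ∀ (b : Branch F), JF.IsBranch b → ∀ l, b = .fin l → l ≠ [] := by
    intro b hb l hbl
    subst hbl
    intro h
    subst h
    simpa using hb.1
  constructor
  · intro I x hx b1 b2 hb1 hb2 hs1 hs2 p hp hle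
    rw [Bwf_prepend JF sg p b1 (hfinne b1 hb1), Bwf_prepend JF sg p b2 (hfinne b2 hb2)]
    exact hle
  · intro I p hpdef x hx M N hM hN K hK b hb
    suffices h : ∃ b' ∈ OmegaSet p M ∪ OmegaSet p N ∪ PrepSet p K,
        I.val (Bwf JF sg b') = I.val (Bwf JF sg b) by
      obtain ⟨b', hb', he⟩ := h
      exact ⟨⟨b', hb', he.le⟩, ⟨b', hb', he.ge⟩⟩
    rcases hb with hb | hb
    · obtain ⟨w, hw, k, hk, rfl⟩ := hb
      have hkb := (hK k hk).1
      refine ⟨Branch.prepend p k, Or.inr ⟨k, hk, rfl⟩, ?_⟩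
      rw [Bwf_prepend JF sg p k (hfinne k hkb), Bwf_prepend JF sg _ k (hfinne k hkb)]
    · obtain ⟨b0, ⟨f, s, hf, hfne, hcon, rfl⟩, rfl⟩ := hb
      have hhead : ∀ i, (f i).head? = some x := by
        intro i
        rcases hf i with h | h
        · exact (hM _ h).1
        · exact (hN _ h).1
      obtain ⟨i, hi⟩ := exists_loop JF sg x f s hfne hhead hcon
      have hmem : Branch.prepend p (.inf (loopSeq (f i) (hfne i))) ∈
          OmegaSet p M ∪ OmegaSet p N := by
        have hinf : ∀ L : Set (List F), f i ∈ L →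
            (.inf (loopSeq (f i) (hfne i)) : Branch F) ∈ InfIter L := by
          intro L hL
          exact ⟨fun _ => f i, loopSeq (f i) (hfne i), fun _ => hL, fun _ => hfne i,
            loopSeq_concat _ _, rfl⟩
        rcases hf i with h | h
        · exact Or.inl ⟨_, hinf M h, rfl⟩
        · exact Or.inr ⟨_, hinf N h, rfl⟩
      refine ⟨_, Or.inl hmem, ?_⟩
      rw [Bwf_prepend_inf, Bwf_prepend_inf, hi]


end JT
end

section
/- Given a sign function on the justification frame, the stable branch evaluation B_st — mapping a branch x0 → x1 → ... to the first element whose sign differs from that of x0 if such exists, and otherwise to B_wf of the branch — is monotone and selective with respect to every interpretation. -/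
namespace JT

variable {F : Type} {JF : JFrame F} {sg : SignFn JF}

lemma prepend_nil (c : Branch F) : Branch.prepend ([] : List F) c = c := by
  cases c with
  | fin l => simp [Branch.prepend]
  | inf s => simp [Branch.prepend]

lemma prepend_append (u v : List F) (c : Branch F) :
    Branch.prepend (u ++ v) c = Branch.prepend u (Branch.prepend v c) := by
  cases c with
  | fin l => simp [Branch.prepend]
  | inf s =>
    simp only [Branch.prepend, Branch.inf.injEq]
    funext n
    rcases lt_or_ge n u.length with hn | hn
    · have h1 : n < (u ++ v).length := by simp; omega
      rw [dif_pos h1, dif_pos hn, List.get_eq_getElem, List.get_eq_getElem,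
        List.getElem_append_left hn]
    · have hnu : ¬ n < u.length := by omega
      rw [dif_neg hnu]
      rcases lt_or_ge n (u.length + v.length) with hn2 | hn2
      · have h1 : n < (u ++ v).length := by simp; omega
        have h2 : n - u.length < v.length := by omega
        rw [dif_pos h1, dif_pos h2, List.get_eq_getElem, List.get_eq_getElem,
          List.getElem_append_right hn]
      · have h1 : ¬ n < (u ++ v).length := by simp; omega
        have h2 : ¬ n - u.length < v.length := by omega
        rw [dif_neg h1, dif_neg h2]
        congr 1
        simp; omega

lemma startsAt_prepend {x : F} {l : List F} (hl : l.head? = some x) (c : Branch F) :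
    (Branch.prepend l c).startsAt x := by
  cases l with
  | nil => simp at hl
  | cons a t =>
    simp only [List.head?_cons, Option.some.injEq] at hl
    subst hl
    cases c with
    | fin m => simp [Branch.prepend, Branch.startsAt]
    | inf s =>
      show (if h : 0 < (a :: t).length then (a :: t).get ⟨0, h⟩ else s _) = a
      rw [dif_pos (by simp)]
      rfl

end JT
namespace JT
open scoped Classical

variable {F : Type} {JF : JFrame F} {sg : SignFn JF}

lemma Bst_fin_cons (h : F) (t : List F) :
    Bst JF sg (.fin (h :: t)) =
      match t.find? (fun y => sg.sgn y != sg.sgn h) with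
      | some y => y
      | none => Bwf JF sg (.fin (h :: t)) := rfl

lemma Bst_inf_def (s : ℕ → F) :
    Bst JF sg (.inf s) =
      if h : ∃ i, sg.sgn (s i) ≠ sg.sgn (s 0) then s (Nat.find h)
      else Bwf JF sg (.inf s) := rfl

lemma Bwf_inf_def (s : ℕ → F) :
    Bwf JF sg (.inf s) =
      if ∃ n, ∀ i ≥ n, sg.sgn (s i) = false then JF.tLit
      else if ∃ n, ∀ i ≥ n, sg.sgn (s i) = true then JF.fLit
      else JF.uLit := rfl

lemma Bst_inf_eq_of (s : ℕ → F) (n : ℕ) (h1 : sg.sgn (s n) ≠ sg.sgn (s 0))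
    (h2 : ∀ m < n, sg.sgn (s m) = sg.sgn (s 0)) : Bst JF sg (.inf s) = s n := by
  have hex : ∃ i, sg.sgn (s i) ≠ sg.sgn (s 0) := ⟨n, h1⟩
  rw [Bst_inf_def, dif_pos hex]
  congr 1
  rw [Nat.find_eq_iff]
  exact ⟨h1, fun m hm hne => hne (h2 m hm)⟩

lemma Bst_inf_eq_wf (s : ℕ → F) (h : ∀ n, sg.sgn (s n) = sg.sgn (s 0)) :
    Bst JF sg (.inf s) = Bwf JF sg (.inf s) := by
  rw [Bst_inf_def, dif_neg]
  push_neg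
  exact fun i => h i

lemma shift_iff (s s' : ℕ → F) (d : ℕ) (hsh : ∀ i, s' (i + d) = s i) (v : Bool) :
    (∃ n, ∀ i ≥ n, sg.sgn (s' i) = v) ↔ (∃ n, ∀ i ≥ n, sg.sgn (s i) = v) := by
  constructor
  · rintro ⟨n, hn⟩
    exact ⟨n, fun i hi => by rw [← hsh i]; exact hn _ (by omega)⟩
  · rintro ⟨n, hn⟩
    refine ⟨n + d, fun i hi => ?_⟩
    have h2 : i - d + d = i := by omega
    rw [← h2, hsh]
    exact hn _ (by omega)

lemma Bwf_inf_shift (s s' : ℕ → F) (d : ℕ) (hsh : ∀ i, s' (i + d) = s i) :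
    Bwf JF sg (.inf s') = Bwf JF sg (.inf s) := by
  have h1 := shift_iff (sg := sg) s s' d hsh false
  have h2 := shift_iff (sg := sg) s s' d hsh true
  rw [Bwf_inf_def, Bwf_inf_def]
  simp only [h1, h2]

lemma Bst_inf_const (s s2 : ℕ → F) (v : Bool) (h : ∀ n, sg.sgn (s n) = v)
    (h2 : ∀ n, sg.sgn (s2 n) = v) : Bst JF sg (.inf s) = Bst JF sg (.inf s2) := by
  rw [Bst_inf_eq_wf s (fun n => by rw [h, h]), Bst_inf_eq_wf s2 (fun n => by rw [h2, h2])]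
  rw [Bwf_inf_def, Bwf_inf_def]
  cases v <;> simp [h, h2]

end JT
namespace JT
open scoped Classical

variable {F : Type} {JF : JFrame F} {sg : SignFn JF}

lemma prepend_inf (P : List F) (s : ℕ → F) :
    Branch.prepend P (.inf s) =
      .inf (fun n => if h : n < P.length then P.get ⟨n, h⟩ else s (n - P.length)) := rfl

/-- L1: if the tail of `P` contains a sign change, `Bst` of `P` prepended to anything is
the first such element. -/
lemma Bst_prepend_some {h0 : F} {t : List F} {y : F}
    (hfind : t.find? (fun z => sg.sgn z != sg.sgn h0) = some y) (c : Branch F) :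
    Bst JF sg (Branch.prepend (h0 :: t) c) = y := by
  obtain ⟨hpy, j, hj, hjy, hmin⟩ := List.find?_eq_some_iff_getElem.mp hfind
  have hpy' : sg.sgn y ≠ sg.sgn h0 := by simpa using hpy
  have hmin' : ∀ i (hi : i < j), sg.sgn t[i] = sg.sgn h0 := by
    intro i hi
    simpa using hmin i hi
  cases c with
  | fin l =>
    show Bst JF sg (.fin ((h0 :: t) ++ l)) = y
    rw [List.cons_append, Bst_fin_cons, List.find?_append, hfind]
    rfl
  | inf s =>
    rw [prepend_inf]
    set s' : ℕ → F :=
      fun n => if h : n < (h0 :: t).length then (h0 :: t).get ⟨n, h⟩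
        else s (n - (h0 :: t).length) with hs'
    have e0 : s' 0 = h0 := by rw [hs']; simp
    have ej : s' (j + 1) = y := by
      have hjl : j + 1 < (h0 :: t).length := by simp; omega
      rw [hs']
      simp only [dif_pos hjl, List.get_eq_getElem, List.getElem_cons_succ]
      exact hjy
    have hm : ∀ m < j + 1, sg.sgn (s' m) = sg.sgn (s' 0) := by
      intro m hm
      rw [e0]
      match m, hm with
      | 0, _ => rw [e0]
      | (i+1), hm =>
        have hil : i + 1 < (h0 :: t).length := by simp; omega
        rw [hs']
        simp only [dif_pos hil, List.get_eq_getElem, List.getElem_cons_succ]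
        exact hmin' i (by omega)
    rw [Bst_inf_eq_of s' (j + 1) (by rw [ej, e0]; exact hpy') hm, ej]

/-- L2: no sign change in `P`, but the branch starts at `x` with a different sign. -/
lemma Bst_prepend_x {h0 : F} {t : List F} {x : F}
    (hfind : t.find? (fun z => sg.sgn z != sg.sgn h0) = none)
    {c : Branch F} (hc : c.startsAt x) (hx : sg.sgn x ≠ sg.sgn h0) :
    Bst JF sg (Branch.prepend (h0 :: t) c) = x := by
  have ht : ∀ a ∈ t, sg.sgn a = sg.sgn h0 := by
    intro a ha
    have := List.find?_eq_none.mp hfind a ha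
    simpa using this
  cases c with
  | fin l =>
    cases l with
    | nil => simp [Branch.startsAt] at hc
    | cons a r =>
      simp only [Branch.startsAt, List.head?_cons, Option.some.injEq] at hc
      subst hc
      show Bst JF sg (.fin ((h0 :: t) ++ (a :: r))) = a
      have : (a :: r).find? (fun z => sg.sgn z != sg.sgn h0) = some a := by
        rw [List.find?_cons_of_pos]
        simpa using hx
      rw [List.cons_append, Bst_fin_cons, List.find?_append, hfind, Option.none_or, this]
  | inf s =>
    have hc0 : s 0 = x := hc
    rw [prepend_inf]
    set s' : ℕ → F :=
      fun n => if h : n < (h0 :: t).length then (h0 :: t).get ⟨n, h⟩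
        else s (n - (h0 :: t).length) with hs'
    have e0 : s' 0 = h0 := by rw [hs']; simp
    have eL : s' (h0 :: t).length = x := by
      rw [hs']
      simp [hc0]
    have hm : ∀ m < (h0 :: t).length, sg.sgn (s' m) = sg.sgn (s' 0) := by
      intro m hm
      rw [e0]
      match m, hm with
      | 0, _ => rw [e0]
      | (i+1), hm =>
        rw [hs']
        simp only [dif_pos hm, List.get_eq_getElem, List.getElem_cons_succ]
        exact ht _ (List.getElem_mem _)
    rw [Bst_inf_eq_of s' (h0 :: t).length (by rw [eL, e0]; exact hx) hm, eL]

/-- L3: no sign change in `P`, and the branch starts at `x` with the same sign: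
prepending is invisible. -/
lemma Bst_prepend_eq {h0 : F} {t : List F} {x : F}
    (hfind : t.find? (fun z => sg.sgn z != sg.sgn h0) = none)
    {c : Branch F} (hc : c.startsAt x) (hx : sg.sgn x = sg.sgn h0) :
    Bst JF sg (Branch.prepend (h0 :: t) c) = Bst JF sg c := by
  have ht : ∀ a ∈ t, sg.sgn a = sg.sgn h0 := by
    intro a ha
    have := List.find?_eq_none.mp hfind a ha
    simpa using this
  have hpred : (fun z => sg.sgn z != sg.sgn h0) = (fun z => sg.sgn z != sg.sgn x) := by
    funext z; rw [hx]
  cases c with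
  | fin l =>
    cases l with
    | nil => simp [Branch.startsAt] at hc
    | cons a r =>
      simp only [Branch.startsAt, List.head?_cons, Option.some.injEq] at hc
      subst hc
      show Bst JF sg (.fin ((h0 :: t) ++ (a :: r))) = Bst JF sg (.fin (a :: r))
      rw [List.cons_append, Bst_fin_cons, Bst_fin_cons, List.find?_append, hfind,
        Option.none_or]
      have hfa : (a :: r).find? (fun z => sg.sgn z != sg.sgn h0)
          = r.find? (fun z => sg.sgn z != sg.sgn a) := by
        rw [List.find?_cons_of_neg (by simp [hx]), hpred]
      rw [hfa]
      cases hfr : r.find? (fun z => sg.sgn z != sg.sgn a) with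
      | some y => rfl
      | none =>
        show Bwf JF sg (.fin (h0 :: (t ++ a :: r))) = Bwf JF sg (.fin (a :: r))
        show (h0 :: (t ++ a :: r)).getLastD JF.uLit = (a :: r).getLastD JF.uLit
        rw [← List.cons_append]
        rw [List.getLastD_eq_getLast?, List.getLastD_eq_getLast?,
          List.getLast?_append_of_ne_nil _ (by simp)]
  | inf s =>
    have hc0 : s 0 = x := hc
    rw [prepend_inf]
    set L := (h0 :: t).length with hL
    set s' : ℕ → F :=
      fun n => if h : n < (h0 :: t).length then (h0 :: t).get ⟨n, h⟩
        else s (n - (h0 :: t).length) with hs'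
    have e0 : s' 0 = h0 := by rw [hs']; simp
    have hsh : ∀ i, s' (i + L) = s i := by
      intro i
      rw [hs', hL]
      have : ¬ i + (h0 :: t).length < (h0 :: t).length := by omega
      simp only [dif_neg this]
      congr 1
      omega
    have hpre : ∀ m, m < L → sg.sgn (s' m) = sg.sgn h0 := by
      intro m hm
      match m, hm with
      | 0, _ => rw [e0]
      | (i+1), hm =>
        rw [hs']
        simp only [dif_pos (show i + 1 < (h0 :: t).length from hm), List.get_eq_getElem, List.getElem_cons_succ]
        exact ht _ (List.getElem_mem _)
    by_cases hex : ∃ i, sg.sgn (s i) ≠ sg.sgn (s 0)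
    · set n0 := Nat.find hex with hn0
      have hspec := Nat.find_spec hex
      have hminn := fun m hm => Nat.find_min hex (m := m) hm
      have hR : Bst JF sg (.inf s) = s n0 :=
        Bst_inf_eq_of s n0 hspec (fun m hm => by
          have := hminn m hm
          push_neg at this
          exact this)
      have eLn : s' (L + n0) = s n0 := by rw [add_comm]; exact hsh n0
      have hLf : Bst JF sg (.inf s') = s' (L + n0) := by
        apply Bst_inf_eq_of
        · rw [eLn, e0]
          exact fun hcon => hspec (by rw [hcon, hc0, hx])
        · intro m hm
          rw [e0]
          by_cases hmL : m < L
          · exact hpre m hmL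
          · have : m - L + L = m := by omega
            rw [← this, hsh]
            have hmn : m - L < n0 := by omega
            have := hminn _ hmn
            push_neg at this
            rw [this, hc0, hx]
      rw [hLf, eLn, hR]
    · push_neg at hex
      have hex' : ∀ i, sg.sgn (s' i) = sg.sgn (s' 0) := by
        intro i
        rw [e0]
        by_cases hiL : i < L
        · exact hpre i hiL
        · have : i - L + L = i := by omega
          rw [← this, hsh, hex, hc0, hx]
      rw [Bst_inf_eq_wf s' hex', Bst_inf_eq_wf s (fun n => hex n)]
      exact Bwf_inf_shift s s' L hsh

/-- L3' -/
lemma Bst_prepend_eq' {x : F} {p : List F}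
    (hp : ∀ a ∈ p, sg.sgn a = sg.sgn x)
    {c : Branch F} (hc : c.startsAt x) :
    Bst JF sg (Branch.prepend p c) = Bst JF sg c := by
  cases p with
  | nil => rw [prepend_nil]
  | cons h0 t =>
    have hh0 : sg.sgn h0 = sg.sgn x := hp h0 (by simp)
    refine Bst_prepend_eq ?_ hc hh0.symm
    rw [List.find?_eq_none]
    intro a ha
    simp [hp a (by simp [ha]), hh0]

/-- LIFT -/
lemma Bst_prepend_congr {x : F} (p : List F)
    {c c' : Branch F} (hc : c.startsAt x) (hc' : c'.startsAt x)
    (h : Bst JF sg c = Bst JF sg c') :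
    Bst JF sg (Branch.prepend p c) = Bst JF sg (Branch.prepend p c') := by
  cases p with
  | nil => rw [prepend_nil, prepend_nil]; exact h
  | cons h0 t =>
    cases hfind : t.find? (fun z => sg.sgn z != sg.sgn h0) with
    | some y => rw [Bst_prepend_some hfind, Bst_prepend_some hfind]
    | none =>
      by_cases hx : sg.sgn x = sg.sgn h0
      · rw [Bst_prepend_eq hfind hc hx, Bst_prepend_eq hfind hc' hx]; exact h
      · rw [Bst_prepend_x hfind hc hx, Bst_prepend_x hfind hc' hx]

end JT
namespace JT
open scoped Classical

variable {F : Type} {JF : JFrame F} {sg : SignFn JF}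

lemma monotone_Bst : JF.MonotoneBE (Bst JF sg) := by
  intro I x hx b1 b2 hb1 hb2 hs1 hs2 p hp hle
  cases p with
  | nil => rw [prepend_nil, prepend_nil]; exact hle
  | cons h0 t =>
    cases hfind : t.find? (fun z => sg.sgn z != sg.sgn h0) with
    | some y => rw [Bst_prepend_some hfind, Bst_prepend_some hfind]
    | none =>
      by_cases hsx : sg.sgn x = sg.sgn h0
      · rw [Bst_prepend_eq hfind hs1 hsx, Bst_prepend_eq hfind hs2 hsx]; exact hle
      · rw [Bst_prepend_x hfind hs1 hsx, Bst_prepend_x hfind hs2 hsx]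

/-- periodic repetition of a nonempty list -/
def qrep (q : List F) (hq : q ≠ []) : ℕ → F :=
  fun n => q.get ⟨n % q.length, Nat.mod_lt _ (List.length_pos_iff.2 hq)⟩

lemma prepend_qrep (q : List F) (hq : q ≠ []) :
    Branch.prepend q (.inf (qrep q hq)) = .inf (qrep q hq) := by
  rw [prepend_inf]
  congr 1
  funext n
  rcases lt_or_ge n q.length with hn | hn
  · rw [dif_pos hn]
    simp [qrep, Nat.mod_eq_of_lt hn]
  · rw [dif_neg (by omega)]
    have e : (n - q.length) % q.length = n % q.length := by
      conv_rhs => rw [show n = n - q.length + q.length by omega]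
      rw [Nat.add_mod_right]
    simp [qrep, e]

lemma head?_get0 {q : List F} {x : F} (hx : q.head? = some x) (h0 : 0 < q.length) :
    q.get ⟨0, h0⟩ = x := by
  cases q with
  | nil => simp at hx
  | cons a t => simpa using hx

lemma qrep_startsAt {q : List F} (hq : q ≠ []) {x : F} (hx : q.head? = some x) :
    (Branch.inf (qrep q hq)).startsAt x := by
  show qrep q hq 0 = x
  simp only [qrep, Nat.zero_mod]
  exact head?_get0 hx _

lemma qrep_mem_InfIter {q : List F} (hq : q ≠ []) {L : Set (List F)} (hqL : q ∈ L) :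
    Branch.inf (qrep q hq) ∈ InfIter L := by
  refine ⟨fun _ => q, qrep q hq, fun _ => hqL, fun _ => hq,
    ⟨fun i => i * q.length, by simp,
      fun i => by show (i+1) * q.length = i * q.length + q.length; rw [Nat.add_mul, one_mul],
      ?_⟩, rfl⟩
  intro i k h
  simp only at h ⊢
  have e : (i * q.length + k) % q.length = k := by
    rw [mul_comm, Nat.mul_add_mod, Nat.mod_eq_of_lt h]
  simp [qrep, e]

lemma flatten_head? {x : F} : ∀ {ls : List (List F)}, (∀ l ∈ ls, l.head? = some x) →
    ls.flatten ≠ [] → ls.flatten.head? = some x := by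
  intro ls
  induction ls with
  | nil => intro _ h; simp at h
  | cons q ls' ih =>
    intro hmem _
    have hq : q.head? = some x := hmem q (by simp)
    have hqne : q ≠ [] := by rintro rfl; simp at hq
    rw [List.flatten_cons, List.head?_append, hq]
    rfl

lemma claimA {x : F} {Lset : Set (List F)} (hL : ∀ q ∈ Lset, q.head? = some x) :
    ∀ ls : List (List F), (∀ l ∈ ls, l ∈ Lset) →
    (∀ a ∈ ls.flatten, sg.sgn a = sg.sgn x) ∨
    (∃ q ∈ Lset, ∃ y, q.tail.find? (fun z => sg.sgn z != sg.sgn x) = some y ∧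
      ls.flatten.head? = some x ∧
      ∀ c : Branch F, Bst JF sg (Branch.prepend ls.flatten c) = y) := by
  intro ls
  induction ls with
  | nil => intro _; left; simp
  | cons q ls' ih =>
    intro hmem
    have hq : q ∈ Lset := hmem q (by simp)
    have hqh := hL q hq
    obtain ⟨tq, rfl⟩ : ∃ tq, q = x :: tq := by
      cases q with
      | nil => simp at hqh
      | cons a tq =>
        simp only [List.head?_cons, Option.some.injEq] at hqh
        exact ⟨tq, by rw [hqh]⟩
    cases hfq : tq.find? (fun z => sg.sgn z != sg.sgn x) with
    | some y =>
      right
      refine ⟨x :: tq, hq, y, by simpa using hfq, ?_, ?_⟩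
      · rw [List.flatten_cons, List.head?_append]
        rfl
      · intro c
        rw [List.flatten_cons, prepend_append]
        exact Bst_prepend_some hfq _
    | none =>
      have htq : ∀ a ∈ tq, sg.sgn a = sg.sgn x := by
        intro a ha
        have := List.find?_eq_none.mp hfq a ha
        simpa using this
      rcases ih (fun l hl => hmem l (by simp [hl])) with hall | ⟨q', hq', y, hfq', hhd', hval'⟩
      · left
        intro a ha
        rw [List.flatten_cons, List.mem_append] at ha
        rcases ha with ha | ha
        · rcases List.mem_cons.mp ha with rfl | ha
          · rfl
          · exact htq a ha
        · exact hall a ha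
      · right
        refine ⟨q', hq', y, hfq', ?_, ?_⟩
        · rw [List.flatten_cons, List.head?_append]
          rfl
        · intro c
          rw [List.flatten_cons, prepend_append]
          rw [Bst_prepend_eq hfq (startsAt_prepend hhd' c) rfl]
          exact hval' c

end JT
namespace JT
open scoped Classical

variable {F : Type} {JF : JFrame F} {sg : SignFn JF}

lemma omega_analysis {x : F} {Lset : Set (List F)} (hL : ∀ q ∈ Lset, q.head? = some x)
    {f : ℕ → List F} {s : ℕ → F} (hf : ∀ i, f i ∈ Lset) (hne : ∀ i, f i ≠ [])
    (hcon : IsConcat f s) :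
    s 0 = x ∧ ∃ q, ∃ hqL : q ∈ Lset, ∃ hq : q ≠ [],
      Bst JF sg (.inf (qrep q hq)) = Bst JF sg (.inf s) := by
  obtain ⟨c, hc0, hcs, hck⟩ := hcon
  have hlenpos : ∀ i, 0 < (f i).length := fun i => List.length_pos_iff.2 (hne i)
  have hstart : ∀ i, s (c i) = x := by
    intro i
    have h := hck i 0 (hlenpos i)
    rw [Nat.add_zero] at h
    rw [h]
    exact head?_get0 (hL _ (hf i)) _
  have hs0 : s 0 = x := by
    have := hstart 0
    rwa [hc0] at this
  refine ⟨hs0, ?_⟩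
  by_cases hall : ∀ n, sg.sgn (s n) = sg.sgn x
  · refine ⟨f 0, hf 0, hne 0, ?_⟩
    refine Bst_inf_const _ _ (sg.sgn x) ?_ hall
    intro n
    have h := hck 0 (n % (f 0).length) (Nat.mod_lt _ (hlenpos 0))
    rw [hc0, Nat.zero_add, List.get_eq_getElem] at h
    simp only [qrep, List.get_eq_getElem]
    rw [← h]
    exact hall _
  · push_neg at hall
    have hex : ∃ n, sg.sgn (s n) ≠ sg.sgn (s 0) := by
      obtain ⟨n, hn⟩ := hall
      exact ⟨n, by rwa [hs0]⟩
    set n0 := Nat.find hex with hn0def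
    have hspec : sg.sgn (s n0) ≠ sg.sgn (s 0) := Nat.find_spec hex
    have hmin : ∀ m < n0, sg.sgn (s m) = sg.sgn (s 0) := by
      intro m hm
      have := Nat.find_min hex hm
      push_neg at this
      exact this
    have hmono : ∀ i, i ≤ c i := by
      intro i
      induction i with
      | zero => omega
      | succ i ih =>
        rw [hcs i]
        have := hlenpos i
        omega
    have hexj : ∃ j, n0 < c j := ⟨n0 + 1, lt_of_lt_of_le (by omega) (hmono (n0 + 1))⟩
    set j0 := Nat.find hexj with hj0def
    have hj0 : n0 < c j0 := Nat.find_spec hexj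
    have hj0pos : j0 ≠ 0 := by
      intro h
      rw [h, hc0] at hj0
      omega
    obtain ⟨i, hieq⟩ : ∃ i, j0 = i + 1 := ⟨j0 - 1, by omega⟩
    have hci : c i ≤ n0 := by
      have := Nat.find_min hexj (m := i) (by omega)
      omega
    have hlt : n0 - c i < (f i).length := by
      have h1 := hcs i
      rw [hieq] at hj0
      omega
    have hso : s n0 = (f i).get ⟨n0 - c i, hlt⟩ := by
      have h := hck i (n0 - c i) hlt
      rw [← h]
      congr 1
      omega
    have hopos : 0 < n0 - c i := by
      rcases Nat.eq_zero_or_pos (n0 - c i) with h | h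
      · exfalso
        apply hspec
        have hn0x : s n0 = x := by
          have : n0 = c i := by omega
          rw [this, hstart i]
        rw [hn0x, hs0]
      · exact h
    obtain ⟨tq, hqeq⟩ : ∃ tq, f i = x :: tq := by
      have hqh := hL _ (hf i)
      cases hfi : f i with
      | nil => rw [hfi] at hqh; simp at hqh
      | cons a tq =>
        rw [hfi, List.head?_cons, Option.some.injEq] at hqh
        exact ⟨tq, by rw [hqh]⟩
    obtain ⟨o, hoeq⟩ : ∃ o, n0 - c i = o + 1 := ⟨n0 - c i - 1, by omega⟩
    have hlt' : o < tq.length := by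
      have := hlt
      rw [hqeq] at this
      simp at this
      omega
    have hso' : s n0 = tq[o]'hlt' := by
      rw [hso, List.get_eq_getElem]
      simp only [hqeq, hoeq, List.getElem_cons_succ]
    have htqj : ∀ j (hj : j < o), sg.sgn (tq[j]'(by omega)) = sg.sgn x := by
      intro j hj
      have hjlt : j + 1 < (f i).length := by omega
      have h := hck i (j + 1) hjlt
      have h2 : (f i).get ⟨j + 1, hjlt⟩ = tq[j]'(by omega) := by
        rw [List.get_eq_getElem]
        simp only [hqeq, List.getElem_cons_succ]
      rw [h2] at h
      rw [← h, hmin _ (by omega), hs0]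
    have hyfind : tq.find? (fun z => sg.sgn z != sg.sgn x) = some (s n0) := by
      rw [List.find?_eq_some_iff_getElem]
      refine ⟨?_, o, hlt', hso'.symm, ?_⟩
      · simp only [bne_iff_ne, ne_eq, decide_not]
        simp only [← hs0]
        simp [hspec]
      · intro j hj
        have := htqj j hj
        simp [this]
    refine ⟨x :: tq, hqeq ▸ hf i, by simp, ?_⟩
    rw [← prepend_qrep (x :: tq)]
    rw [Bst_prepend_some hyfind]
    exact (Bst_inf_eq_of s n0 hspec hmin).symm
end JT
namespace JT

theorem stmt17 {F : Type} (JF : JFrame F) (sg : SignFn JF) :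
    JF.MonotoneBE (Bst JF sg) ∧ ∀ I : Interp JF, JF.SelectiveBE (Bst JF sg) I := by
  constructor
  · exact monotone_Bst
  · intro I p hp x hx M N hM hN K hK b hb
    have hheads : ∀ q ∈ M ∪ N, q.head? = some x := by
      rintro q (hq | hq)
      exacts [(hM q hq).1, (hN q hq).1]
    suffices h : ∃ c ∈ OmegaSet p M ∪ OmegaSet p N ∪ PrepSet p K,
        Bst JF sg c = Bst JF sg b by
      obtain ⟨c, hcmem, hceq⟩ := h
      exact ⟨⟨c, hcmem, le_of_eq (by rw [hceq])⟩, ⟨c, hcmem, le_of_eq (by rw [hceq])⟩⟩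
    rcases hb with ⟨w, hwFin, k, hkK, rfl⟩ | ⟨b0, hb0, rfl⟩
    · -- StarKSet case
      obtain ⟨ls, hls, rfl⟩ := hwFin
      have hkstart : k.startsAt x := (hK k hkK).2
      rcases claimA hheads ls hls with hall | ⟨q, hq, y, hfq, hhd, hval⟩
      · refine ⟨Branch.prepend p k, Or.inr ⟨k, hkK, rfl⟩, ?_⟩
        rw [prepend_append]
        have hstart2 : (Branch.prepend ls.flatten k).startsAt x := by
          by_cases hfe : ls.flatten = []
          · rw [hfe, prepend_nil]; exact hkstart
          · exact startsAt_prepend (flatten_head? (fun l hl => hheads l (hls l hl)) hfe) k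
        exact Bst_prepend_congr p hkstart hstart2 (Bst_prepend_eq' hall hkstart).symm
      · have hqne : q ≠ [] := by
          have := hheads q hq
          rintro rfl
          simp at this
        refine ⟨Branch.prepend p (.inf (qrep q hqne)), ?_, ?_⟩
        · rcases hq with hq' | hq'
          · exact Or.inl (Or.inl ⟨_, qrep_mem_InfIter hqne hq', rfl⟩)
          · exact Or.inl (Or.inr ⟨_, qrep_mem_InfIter hqne hq', rfl⟩)
        · rw [prepend_append]
          apply Bst_prepend_congr p (qrep_startsAt hqne (hheads q hq)) (startsAt_prepend hhd k)
          rw [hval k]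
          obtain ⟨tq, rfl⟩ : ∃ tq, q = x :: tq := by
            have hqh := hheads q hq
            cases q with
            | nil => simp at hqh
            | cons a tq =>
              simp only [List.head?_cons, Option.some.injEq] at hqh
              exact ⟨tq, by rw [hqh]⟩
          rw [← prepend_qrep (x :: tq) hqne]
          exact Bst_prepend_some (by simpa using hfq) _
    · -- Omega case
      obtain ⟨f, s, hfL, hfne, hconc, rfl⟩ := hb0
      obtain ⟨hs0, q, hqL, hqne, heq⟩ := omega_analysis hheads hfL hfne hconc
      refine ⟨Branch.prepend p (.inf (qrep q hqne)), ?_, ?_⟩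
      · rcases hqL with hq' | hq'
        · exact Or.inl (Or.inl ⟨_, qrep_mem_InfIter hqne hq', rfl⟩)
        · exact Or.inl (Or.inr ⟨_, qrep_mem_InfIter hqne hq', rfl⟩)
      · exact Bst_prepend_congr p (qrep_startsAt hqne (hheads q hqL))
          (show (Branch.inf s).startsAt x from hs0) heq

end JT
end
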